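/- Let G be a GP5-graph constructed from a connected graph H with n vertices. The set S = {a_i, b_i, c_i, d_i : 1 ≤ i ≤ n} is a paired dominating set of G; hence γ_{pr}(G) ≤ 4n. -/
import Mathlib


open SimpleGraph Finset

/-- `D` is a dominating set of `G`. -/
def Dominating {V : Type*} (G : SimpleGraph V) (D : Finset V) : Prop :=
  ∀ v : V, ∃ u ∈ D, u = v ∨ G.Adj u v

/-- `D` is a semipaired dominating set of `G`: a dominating set whose vertices can be
partitioned into pairs (via a fixed-point-free involution) at distance at most 2. -/
def SemiPairedDom {V : Type*} (G : SimpleGraph V) (D : Finset V) : Prop :=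
  Dominating G D ∧ ∃ f : V → V,
    (∀ u ∈ D, f u ∈ D) ∧ (∀ u ∈ D, f (f u) = u) ∧ (∀ u ∈ D, f u ≠ u) ∧
    (∀ u ∈ D, G.Adj u (f u) ∨ ∃ w, G.Adj u w ∧ G.Adj w (f u))

/-- `D` is a paired dominating set of `G`: a dominating set whose induced subgraph has a
perfect matching (encoded by a fixed-point-free involution pairing adjacent vertices). -/
def PairedDom {V : Type*} (G : SimpleGraph V) (D : Finset V) : Prop :=
  Dominating G D ∧ ∃ f : V → V,
    (∀ u ∈ D, f u ∈ D) ∧ (∀ u ∈ D, f (f u) = u) ∧ (∀ u ∈ D, f u ≠ u) ∧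
    (∀ u ∈ D, G.Adj u (f u))

/-- The domination number. -/
noncomputable def domNum (V : Type*) [Fintype V] (G : SimpleGraph V) : ℕ :=
  sInf {k : ℕ | ∃ D : Finset V, Dominating G D ∧ D.card = k}

/-- The semipaired domination number. -/
noncomputable def semiPairedDomNum (V : Type*) [Fintype V] (G : SimpleGraph V) : ℕ :=
  sInf {k : ℕ | ∃ D : Finset V, SemiPairedDom G D ∧ D.card = k}

/-- The paired domination number. -/
noncomputable def pairedDomNum (V : Type*) [Fintype V] (G : SimpleGraph V) : ℕ :=
  sInf {k : ℕ | ∃ D : Finset V, PairedDom G D ∧ D.card = k}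

/-- The GP5-graph obtained from `H` by attaching, for each vertex `a`, a disjoint path
`a_a – b_a – c_a – d_a – e_a` (the vertices `Sum.inr (a, 0), …, Sum.inr (a, 4)`) and
joining `a` to the central vertex `c_a = Sum.inr (a, 2)`. -/
def GP5 {α : Type*} (H : SimpleGraph α) : SimpleGraph (α ⊕ α × Fin 5) :=
  SimpleGraph.fromRel (fun u v =>
    (∃ a b, u = Sum.inl a ∧ v = Sum.inl b ∧ H.Adj a b) ∨
    (∃ a, u = Sum.inl a ∧ v = Sum.inr (a, 2)) ∨
    (∃ (a : α) (j k : Fin 5), u = Sum.inr (a, j) ∧ v = Sum.inr (a, k) ∧ (k : ℕ) = (j : ℕ) + 1))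


open SimpleGraph Finset

section Aux

variable {α : Type*} (H : SimpleGraph α)

private lemma gp5_adj_path (a : α) (j k : Fin 5) (h : (k : ℕ) = (j : ℕ) + 1) :
    (GP5 H).Adj (Sum.inr (a, j)) (Sum.inr (a, k)) := by
  rw [GP5, SimpleGraph.fromRel_adj]
  constructor
  · intro he
    have : j = k := by simpa using he
    omega
  · exact Or.inl (Or.inr (Or.inr ⟨a, j, k, rfl, rfl, h⟩))

private lemma gp5_adj_center (a : α) :
    (GP5 H).Adj (Sum.inr (a, 2)) (Sum.inl a) := by
  rw [GP5, SimpleGraph.fromRel_adj]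
  exact ⟨by simp, Or.inr (Or.inr (Or.inl ⟨a, rfl, rfl⟩))⟩

end Aux

/-- The set `S = {a_i, b_i, c_i, d_i}` is a paired dominating set of the
GP5-graph; hence `γ_{pr}(G) ≤ 4n`. -/
theorem gp5_pairedDomNum_le {α : Type*} [Fintype α] [DecidableEq α]
    (H : SimpleGraph α) (hH : H.Connected) :
    PairedDom (GP5 H)
      ((Finset.univ.image fun a : α => (Sum.inr (a, 0) : α ⊕ α × Fin 5)) ∪
        (Finset.univ.image fun a : α => (Sum.inr (a, 1) : α ⊕ α × Fin 5)) ∪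
        (Finset.univ.image fun a : α => (Sum.inr (a, 2) : α ⊕ α × Fin 5)) ∪
        (Finset.univ.image fun a : α => (Sum.inr (a, 3) : α ⊕ α × Fin 5))) ∧
    pairedDomNum (α ⊕ α × Fin 5) (GP5 H) ≤ 4 * Fintype.card α := by
  classical
  set S : Finset (α ⊕ α × Fin 5) :=
      ((Finset.univ.image fun a : α => (Sum.inr (a, 0) : α ⊕ α × Fin 5)) ∪
        (Finset.univ.image fun a : α => (Sum.inr (a, 1) : α ⊕ α × Fin 5)) ∪
        (Finset.univ.image fun a : α => (Sum.inr (a, 2) : α ⊕ α × Fin 5)) ∪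
        (Finset.univ.image fun a : α => (Sum.inr (a, 3) : α ⊕ α × Fin 5))) with hS
  have hmem : ∀ (a : α) (j : Fin 5), j = 0 ∨ j = 1 ∨ j = 2 ∨ j = 3 →
      (Sum.inr (a, j) : α ⊕ α × Fin 5) ∈ S := by
    intro a j hj
    simp only [hS, Finset.mem_union, Finset.mem_image, Finset.mem_univ, true_and]
    rcases hj with h | h | h | h <;> subst h
    · exact Or.inl (Or.inl (Or.inl ⟨a, rfl⟩))
    · exact Or.inl (Or.inl (Or.inr ⟨a, rfl⟩))
    · exact Or.inl (Or.inr ⟨a, rfl⟩)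
    · exact Or.inr ⟨a, rfl⟩
  have hmemS : ∀ u ∈ S, ∃ (a : α) (j : Fin 5),
      (j = 0 ∨ j = 1 ∨ j = 2 ∨ j = 3) ∧ u = Sum.inr (a, j) := by
    intro u hu
    simp only [hS, Finset.mem_union, Finset.mem_image, Finset.mem_univ, true_and] at hu
    rcases hu with ((⟨a, rfl⟩ | ⟨a, rfl⟩) | ⟨a, rfl⟩) | ⟨a, rfl⟩
    · exact ⟨a, 0, Or.inl rfl, rfl⟩
    · exact ⟨a, 1, Or.inr (Or.inl rfl), rfl⟩
    · exact ⟨a, 2, Or.inr (Or.inr (Or.inl rfl)), rfl⟩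
    · exact ⟨a, 3, Or.inr (Or.inr (Or.inr rfl)), rfl⟩
  have hdom : Dominating (GP5 H) S := by
    intro v
    rcases v with a | ⟨a, j⟩
    · exact ⟨Sum.inr (a, 2), hmem a 2 (by simp), Or.inr (gp5_adj_center H a)⟩
    · fin_cases j
      · exact ⟨Sum.inr (a, 0), hmem a 0 (by simp), Or.inl rfl⟩
      · exact ⟨Sum.inr (a, 1), hmem a 1 (by simp), Or.inl rfl⟩
      · exact ⟨Sum.inr (a, 2), hmem a 2 (by simp), Or.inl rfl⟩
      · exact ⟨Sum.inr (a, 3), hmem a 3 (by simp), Or.inl rfl⟩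
      · exact ⟨Sum.inr (a, 3), hmem a 3 (by simp),
          Or.inr (gp5_adj_path H a 3 4 (by decide))⟩
  have hpaired : PairedDom (GP5 H) S := by
    refine ⟨hdom, fun u => match u with
      | Sum.inl a => Sum.inl a
      | Sum.inr (a, j) => Sum.inr (a, ![1, 0, 3, 2, 4] j), ?_, ?_, ?_, ?_⟩
    · intro u hu
      obtain ⟨a, j, hj, rfl⟩ := hmemS u hu
      rcases hj with h | h | h | h <;> subst h <;>
        simp only [Matrix.cons_val_zero, Matrix.cons_val_one, Matrix.head_cons] <;>
        exact hmem a _ (by decide)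
    · intro u hu
      obtain ⟨a, j, hj, rfl⟩ := hmemS u hu
      rcases hj with h | h | h | h <;> subst h <;> rfl
    · intro u hu
      obtain ⟨a, j, hj, rfl⟩ := hmemS u hu
      rcases hj with h | h | h | h <;> subst h <;>
        · intro hcon
          rw [Sum.inr.injEq, Prod.mk.injEq] at hcon
          exact absurd hcon.2 (by decide)
    · intro u hu
      obtain ⟨a, j, hj, rfl⟩ := hmemS u hu
      rcases hj with h | h | h | h <;> subst h
      · exact gp5_adj_path H a 0 1 (by decide)
      · exact ((gp5_adj_path H a 0 1 (by decide)).symm :)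
      · exact gp5_adj_path H a 2 3 (by decide)
      · exact ((gp5_adj_path H a 2 3 (by decide)).symm :)
  have hinj : ∀ j : Fin 5, Function.Injective
      (fun a : α => (Sum.inr (a, j) : α ⊕ α × Fin 5)) := by
    intro j a b h
    simpa using h
  have hcard : S.card = 4 * Fintype.card α := by
    rw [hS, Finset.card_union_of_disjoint, Finset.card_union_of_disjoint,
      Finset.card_union_of_disjoint, Finset.card_image_of_injective _ (hinj 0),
      Finset.card_image_of_injective _ (hinj 1), Finset.card_image_of_injective _ (hinj 2),
      Finset.card_image_of_injective _ (hinj 3), Finset.card_univ]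
    · ring
    · simp only [Finset.disjoint_left, Finset.mem_image, Finset.mem_univ, true_and]
      rintro x ⟨a, rfl⟩ ⟨b, hb⟩
      simp [Prod.ext_iff] at hb
    · simp only [Finset.disjoint_left, Finset.mem_union, Finset.mem_image, Finset.mem_univ,
        true_and]
      rintro x (⟨a, rfl⟩ | ⟨a, rfl⟩) ⟨b, hb⟩ <;> simp [Prod.ext_iff] at hb
    · simp only [Finset.disjoint_left, Finset.mem_union, Finset.mem_image, Finset.mem_univ,
        true_and]
      rintro x ((⟨a, rfl⟩ | ⟨a, rfl⟩) | ⟨a, rfl⟩) ⟨b, hb⟩ <;> simp [Prod.ext_iff] at hb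
  refine ⟨hpaired, ?_⟩
  exact Nat.sInf_le ⟨S, hpaired, hcard⟩
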